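/- Let t ≥ 2 be an integer, let R = K[x,y,z] be the polynomial ring in three variables over a field K, and let I = (x^t, x y^{t−2} z, y^{t−1} z). Then for every integer s with 1 ≤ s ≤ t−1, the maximal ideal m = (x,y,z) is not an associated prime of R/I^s, i.e., m ∉ Ass(R/I^s). -/

import Mathlib

open MvPolynomial

namespace Stmt15

noncomputable def ev (t a b c : ℕ) : Fin 3 →₀ ℕ :=
  Finsupp.single 0 (t * a + b) + Finsupp.single 1 ((t - 2) * b + (t - 1) * c)
    + Finsupp.single 2 (b + c)

def Ee (t s : ℕ) : Set (Fin 3 →₀ ℕ) := {v | ∃ a b c : ℕ, a + b + c = s ∧ v = ev t a b c}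

lemma ev_apply0 (t a b c : ℕ) : ev t a b c 0 = t * a + b := by
  simp [ev, Finsupp.single_apply]

lemma ev_apply1 (t a b c : ℕ) : ev t a b c 1 = (t - 2) * b + (t - 1) * c := by
  simp [ev, Finsupp.single_apply]

lemma ev_apply2 (t a b c : ℕ) : ev t a b c 2 = b + c := by
  simp [ev, Finsupp.single_apply]

lemma ev_add (t a₁ b₁ c₁ a₂ b₂ c₂ : ℕ) :
    ev t (a₁ + a₂) (b₁ + b₂) (c₁ + c₂) = ev t a₁ b₁ c₁ + ev t a₂ b₂ c₂ := by
  simp only [ev, mul_add, Finsupp.single_add]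
  abel

lemma decomp (a b c s₁ s₂ : ℕ) (h : a + b + c = s₁ + s₂) :
    ∃ a₁ b₁ c₁ a₂ b₂ c₂ : ℕ, a₁ + a₂ = a ∧ b₁ + b₂ = b ∧ c₁ + c₂ = c ∧
      a₁ + b₁ + c₁ = s₁ ∧ a₂ + b₂ + c₂ = s₂ := by
  refine ⟨min a s₁, min b (s₁ - min a s₁), s₁ - min a s₁ - min b (s₁ - min a s₁),
    a - min a s₁, b - min b (s₁ - min a s₁), c - (s₁ - min a s₁ - min b (s₁ - min a s₁)),
    ?_, ?_, ?_, ?_, ?_⟩ <;> omega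

lemma key (t s p q r : ℕ) (ht : 2 ≤ t) (hs : s ≤ t - 1)
    (h2 : ∃ a b c : ℕ, a + b + c = s ∧ t * a + b ≤ p ∧
        (t - 2) * b + (t - 1) * c ≤ q + 1 ∧ b + c ≤ r)
    (h3 : ∃ a b c : ℕ, a + b + c = s ∧ t * a + b ≤ p ∧
        (t - 2) * b + (t - 1) * c ≤ q ∧ b + c ≤ r + 1) :
    ∃ a b c : ℕ, a + b + c = s ∧ t * a + b ≤ p ∧
        (t - 2) * b + (t - 1) * c ≤ q ∧ b + c ≤ r := by
  obtain ⟨a₂, b₂, c₂, hs2, hp2, hq2, hr2⟩ := h2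
  obtain ⟨a₃, b₃, c₃, hs3, hp3, hq3, hr3⟩ := h3
  by_cases hq2' : (t - 2) * b₂ + (t - 1) * c₂ ≤ q
  · exact ⟨a₂, b₂, c₂, hs2, hp2, hq2', hr2⟩
  by_cases hr3' : b₃ + c₃ ≤ r
  · exact ⟨a₃, b₃, c₃, hs3, hp3, hq3, hr3'⟩
  exfalso
  obtain ⟨T, rfl⟩ : ∃ T : ℕ, t = T + 2 := ⟨t - 2, by omega⟩
  have e2 : (T + 2 - 2) * b₂ + (T + 2 - 1) * c₂ = T * (b₂ + c₂) + c₂ := by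
    simp only [show T + 2 - 2 = T from rfl, show T + 2 - 1 = T + 1 by omega]
    ring
  have e3 : (T + 2 - 2) * b₃ + (T + 2 - 1) * c₃ = T * (b₃ + c₃) + c₃ := by
    simp only [show T + 2 - 2 = T from rfl, show T + 2 - 1 = T + 1 by omega]
    ring
  rw [e2] at hq2 hq2'
  rw [e3] at hq3
  have hu : b₂ + c₂ + 1 ≤ b₃ + c₃ := by omega
  have hmul : T * (b₂ + c₂) + T ≤ T * (b₃ + c₃) := by
    calc T * (b₂ + c₂) + T = T * (b₂ + c₂ + 1) := by ring
    _ ≤ T * (b₃ + c₃) := Nat.mul_le_mul_left T hu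
  omega

variable {K : Type*} [Field K]

lemma gen1 (t : ℕ) : (X 0 : MvPolynomial (Fin 3) K) ^ t = monomial (ev t 1 0 0) 1 := by
  simp [ev, X_pow_eq_monomial]

lemma gen2 (t : ℕ) :
    (X 0 : MvPolynomial (Fin 3) K) * X 1 ^ (t - 2) * X 2 = monomial (ev t 0 1 0) 1 := by
  rw [show (X 0 : MvPolynomial (Fin 3) K) = X 0 ^ 1 from (pow_one ..).symm,
    show (X 2 : MvPolynomial (Fin 3) K) = X 2 ^ 1 from (pow_one ..).symm]
  simp only [ev, X_pow_eq_monomial, monomial_mul, one_mul]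
  norm_num

lemma gen3 (t : ℕ) :
    (X 1 : MvPolynomial (Fin 3) K) ^ (t - 1) * X 2 = monomial (ev t 0 0 1) 1 := by
  rw [show (X 2 : MvPolynomial (Fin 3) K) = X 2 ^ 1 from (pow_one ..).symm]
  simp only [ev, X_pow_eq_monomial, monomial_mul, one_mul]
  norm_num

lemma span_one (t : ℕ) :
    Ideal.span {(X 0 : MvPolynomial (Fin 3) K) ^ t, X 0 * X 1 ^ (t - 2) * X 2,
        X 1 ^ (t - 1) * X 2} =
      Ideal.span ((fun v => monomial v (1 : K)) '' Ee t 1) := by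
  congr 1
  ext f
  constructor
  · rintro (rfl | rfl | rfl)
    · exact ⟨ev t 1 0 0, ⟨1, 0, 0, rfl, rfl⟩, (gen1 t).symm⟩
    · exact ⟨ev t 0 1 0, ⟨0, 1, 0, rfl, rfl⟩, (gen2 t).symm⟩
    · exact ⟨ev t 0 0 1, ⟨0, 0, 1, rfl, rfl⟩, (gen3 t).symm⟩
  · rintro ⟨v, ⟨a, b, c, habc, rfl⟩, rfl⟩
    rcases show (a = 1 ∧ b = 0 ∧ c = 0) ∨ (a = 0 ∧ b = 1 ∧ c = 0) ∨
        (a = 0 ∧ b = 0 ∧ c = 1) by omega with ⟨rfl, rfl, rfl⟩ | ⟨rfl, rfl, rfl⟩ | ⟨rfl, rfl, rfl⟩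
    · simp only [Set.mem_insert_iff, Set.mem_singleton_iff]
      exact Or.inl (gen1 t).symm
    · simp only [Set.mem_insert_iff, Set.mem_singleton_iff]
      exact Or.inr (Or.inl (gen2 t).symm)
    · simp only [Set.mem_insert_iff, Set.mem_singleton_iff]
      exact Or.inr (Or.inr (gen3 t).symm)

lemma span_pow (t s : ℕ) :
    (Ideal.span {(X 0 : MvPolynomial (Fin 3) K) ^ t, X 0 * X 1 ^ (t - 2) * X 2,
        X 1 ^ (t - 1) * X 2}) ^ s =
      Ideal.span ((fun v => monomial v (1 : K)) '' Ee t s) := by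
  induction s with
  | zero =>
      rw [pow_zero]
      have : Ee t 0 = {0} := by
        ext v
        constructor
        · rintro ⟨a, b, c, habc, rfl⟩
          obtain ⟨rfl, rfl, rfl⟩ : a = 0 ∧ b = 0 ∧ c = 0 := by omega
          simp [ev]
        · rintro rfl
          exact ⟨0, 0, 0, rfl, by simp [ev]⟩
      rw [this]
      simp [Ideal.span_singleton_one]
  | succ n ih =>
      rw [pow_succ, ih, span_one (K := K) t, Ideal.span_mul_span']
      congr 1
      ext f
      constructor
      · rintro ⟨-, ⟨u, hu, rfl⟩, -, ⟨v, hv, rfl⟩, rfl⟩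
        obtain ⟨a₁, b₁, c₁, h₁, rfl⟩ := hu
        obtain ⟨a₂, b₂, c₂, h₂, rfl⟩ := hv
        refine ⟨ev t (a₁ + a₂) (b₁ + b₂) (c₁ + c₂), ⟨a₁ + a₂, b₁ + b₂, c₁ + c₂, by omega, rfl⟩, ?_⟩
        simp [ev_add, monomial_mul]
      · rintro ⟨v, ⟨a, b, c, habc, rfl⟩, rfl⟩
        obtain ⟨a₁, b₁, c₁, a₂, b₂, c₂, ha, hb, hc, h₁, h₂⟩ := decomp a b c n 1 habc
        refine ⟨monomial (ev t a₁ b₁ c₁) 1, ⟨ev t a₁ b₁ c₁, ⟨a₁, b₁, c₁, h₁, rfl⟩, rfl⟩,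
          monomial (ev t a₂ b₂ c₂) 1, ⟨ev t a₂ b₂ c₂, ⟨a₂, b₂, c₂, h₂, rfl⟩, rfl⟩, ?_⟩
        show (monomial (ev t a₁ b₁ c₁) 1 : MvPolynomial (Fin 3) K) * monomial (ev t a₂ b₂ c₂) 1
          = monomial (ev t a b c) 1
        rw [monomial_mul, ← ev_add, ha, hb, hc, one_mul]


lemma not_assoc_of_colon {R : Type*} [CommRing R] [IsNoetherianRing R] (J P : Ideal R)
    (hcolon : ∀ g : R, (∀ f ∈ P, f * g ∈ J) → g ∈ J) :
    P ∉ associatedPrimes R (R ⧸ J) := by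
  intro h
  obtain ⟨hprime, x, hx⟩ := isAssociatedPrime_iff.mp h
  obtain ⟨g, rfl⟩ := Ideal.Quotient.mk_surjective x
  have hg : g ∈ J := hcolon g (fun f hf => by
    have hf' : f ∈ (⊥ : Submodule R (R ⧸ J)).colon {(Ideal.Quotient.mk J) g} := by
      rw [← hx]; exact hf
    rw [Submodule.mem_colon_singleton, Submodule.mem_bot] at hf'
    rwa [show f • (Ideal.Quotient.mk J g) = Ideal.Quotient.mk J (f * g) from rfl,
      Ideal.Quotient.eq_zero_iff_mem] at hf')
  apply hprime.ne_top
  rw [hx, Ideal.Quotient.eq_zero_iff_mem.mpr hg, eq_top_iff]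
  intro r _
  rw [Submodule.mem_colon_singleton, Submodule.mem_bot, smul_zero]

end Stmt15

open Stmt15 in
theorem maximal_not_associated_low_powers
    {K : Type*} [Field K] (t : ℕ) (ht : 2 ≤ t)
    (s : ℕ) (hs1 : 1 ≤ s) (hs2 : s ≤ t - 1) :
    Ideal.span {(X 0 : MvPolynomial (Fin 3) K), X 1, X 2} ∉
      associatedPrimes (MvPolynomial (Fin 3) K)
        (MvPolynomial (Fin 3) K ⧸
          (Ideal.span {(X 0 : MvPolynomial (Fin 3) K) ^ t,
              (X 0 : MvPolynomial (Fin 3) K) * X 1 ^ (t - 2) * X 2,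
              (X 1 : MvPolynomial (Fin 3) K) ^ (t - 1) * X 2}) ^ s) := by
  apply Stmt15.not_assoc_of_colon
  intro g hfg
  have h1 : X 1 * g ∈ Ideal.span ((fun v => monomial v (1 : K)) '' Ee t s) := by
    rw [← span_pow]
    exact hfg _ (Ideal.subset_span (by simp))
  have h2 : X 2 * g ∈ Ideal.span ((fun v => monomial v (1 : K)) '' Ee t s) := by
    rw [← span_pow]
    exact hfg _ (Ideal.subset_span (by simp))
  rw [span_pow, mem_ideal_span_monomial_image]
  intro d hd
  have m1 : Finsupp.single 1 1 + d ∈ (X 1 * g).support := by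
    rw [support_X_mul]
    exact Finset.mem_map_of_mem _ hd
  have m2 : Finsupp.single 2 1 + d ∈ (X 2 * g).support := by
    rw [support_X_mul]
    exact Finset.mem_map_of_mem _ hd
  obtain ⟨v₁, ⟨a₁, b₁, c₁, h₁, rfl⟩, hle₁⟩ := mem_ideal_span_monomial_image.mp h1 _ m1
  obtain ⟨v₂, ⟨a₂, b₂, c₂, h₂, rfl⟩, hle₂⟩ := mem_ideal_span_monomial_image.mp h2 _ m2
  have w1p : t * a₁ + b₁ ≤ d 0 := by
    have := Finsupp.le_def.mp hle₁ 0
    simpa [ev_apply0, Finsupp.single_apply] using this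
  have w1q : (t - 2) * b₁ + (t - 1) * c₁ ≤ d 1 + 1 := by
    have := Finsupp.le_def.mp hle₁ 1
    simpa [ev_apply1, Finsupp.single_apply, add_comm] using this
  have w1r : b₁ + c₁ ≤ d 2 := by
    have := Finsupp.le_def.mp hle₁ 2
    simpa [ev_apply2, Finsupp.single_apply] using this
  have w2p : t * a₂ + b₂ ≤ d 0 := by
    have := Finsupp.le_def.mp hle₂ 0
    simpa [ev_apply0, Finsupp.single_apply] using this
  have w2q : (t - 2) * b₂ + (t - 1) * c₂ ≤ d 1 := by
    have := Finsupp.le_def.mp hle₂ 1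
    simpa [ev_apply1, Finsupp.single_apply] using this
  have w2r : b₂ + c₂ ≤ d 2 + 1 := by
    have := Finsupp.le_def.mp hle₂ 2
    simpa [ev_apply2, Finsupp.single_apply, add_comm] using this
  obtain ⟨a, b, c, habc, hp, hq, hr⟩ := key t s (d 0) (d 1) (d 2) ht hs2
    ⟨a₁, b₁, c₁, h₁, w1p, w1q, w1r⟩ ⟨a₂, b₂, c₂, h₂, w2p, w2q, w2r⟩
  refine ⟨ev t a b c, ⟨a, b, c, habc, rfl⟩, ?_⟩
  rw [Finsupp.le_def]
  intro i
  fin_cases i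
  · simpa [ev_apply0] using hp
  · simpa [ev_apply1] using hq
  · simpa [ev_apply2] using hr
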